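/- For all positive integers n, d and all k ≥ 1, the set Σ_{n,2d}^k of finite sums of squares of real n-ary d-ic forms having at most k monomials is a closed convex cone: it is closed under addition and under multiplication by nonnegative reals, and it is sequentially closed under coefficientwise convergence (if p_m ∈ Σ_{n,2d}^k for all m and the coefficients of p_m converge to the coefficients of a polynomial p, then p ∈ Σ_{n,2d}^k). -/

import Mathlib

open MvPolynomial Filter

/-- `F_{n,d}^k`: real forms of degree `d` in `n` variables with at most `k` monomials. -/
def IsFormK (n d k : ℕ) (h : MvPolynomial (Fin n) ℝ) : Prop :=
  h.IsHomogeneous d ∧ h.support.card ≤ k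

/-- `Σ_{n,2d}^k`: finite sums of squares of forms in `F_{n,d}^k`. -/
def SigmaSOS (n d k : ℕ) : Set (MvPolynomial (Fin n) ℝ) :=
  { p | ∃ (m : ℕ) (f : Fin m → MvPolynomial (Fin n) ℝ),
      (∀ j, IsFormK n d k (f j)) ∧ p = ∑ j, (f j) ^ 2 }

noncomputable section SOSAux

/-- Exponent bound monomial. -/
def topMon (n N : ℕ) : Fin n →₀ ℕ := Finsupp.equivFunOnFinite.symm fun _ => N

/-- Monomials with all exponents at most `N`. -/
abbrev Mon (n N : ℕ) : Type := {i : Fin n →₀ ℕ // i ∈ Finset.Iic (topMon n N)}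

/-- Coefficient vectors. -/
abbrev Vec (n N : ℕ) : Type := Mon n N → ℝ

variable {n : ℕ}

lemma mem_Iic_topMon {N : ℕ} {i : Fin n →₀ ℕ} (h : Finsupp.degree i ≤ N) :
    i ∈ Finset.Iic (topMon n N) := by
  rw [Finset.mem_Iic]
  intro j
  calc i j ≤ Finsupp.degree i := Finsupp.le_degree j i
    _ ≤ N := h
    _ = topMon n N j := by simp [topMon]

lemma degree_of_homog {N : ℕ} {p : MvPolynomial (Fin n) ℝ} (hp : p.IsHomogeneous N)
    {i : Fin n →₀ ℕ} (hi : i ∈ p.support) : Finsupp.degree i = N := by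
  by_contra h
  exact (mem_support_iff.mp hi) (hp.coeff_eq_zero h)

lemma support_subset_Iic {N : ℕ} {p : MvPolynomial (Fin n) ℝ} (hp : p.IsHomogeneous N) :
    ∀ i ∈ p.support, i ∈ Finset.Iic (topMon n N) := fun i hi =>
  mem_Iic_topMon (le_of_eq (degree_of_homog hp hi))

/-- The coefficient-vector map. -/
def Tmap (n N : ℕ) (p : MvPolynomial (Fin n) ℝ) : Vec n N := fun i => coeff i.1 p

@[simp] lemma Tmap_zero (N : ℕ) : Tmap n N 0 = 0 := by funext i; simp [Tmap]

lemma Tmap_smul (N : ℕ) (c : ℝ) (p : MvPolynomial (Fin n) ℝ) :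
    Tmap n N (c • p) = c • Tmap n N p := by funext i; simp [Tmap]

lemma Tmap_sum {ι : Type*} (N : ℕ) (s : Finset ι) (f : ι → MvPolynomial (Fin n) ℝ) :
    Tmap n N (∑ i ∈ s, f i) = ∑ i ∈ s, Tmap n N (f i) := by
  funext j; simp [Tmap, MvPolynomial.coeff_sum]

/-- Reconstruction of a polynomial from a coefficient vector. -/
def fromVec (n N : ℕ) (u : Vec n N) : MvPolynomial (Fin n) ℝ :=
  ∑ i : Mon n N, monomial i.1 (u i)

lemma coeff_fromVec (N : ℕ) (u : Vec n N) (j : Fin n →₀ ℕ) :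
    coeff j (fromVec n N u) = if h : j ∈ Finset.Iic (topMon n N) then u ⟨j, h⟩ else 0 := by
  classical
  rw [fromVec, MvPolynomial.coeff_sum]
  simp_rw [coeff_monomial]
  split
  · rename_i h
    rw [Finset.sum_eq_single (⟨j, h⟩ : Mon n N)]
    · simp
    · intro b _ hb
      rw [if_neg]
      exact fun hbj => hb (Subtype.ext hbj)
    · intro hj; exact absurd (Finset.mem_univ _) hj
  · rename_i h
    refine Finset.sum_eq_zero fun b _ => ?_
    rw [if_neg]
    exact fun hbj => h (hbj ▸ b.2)

lemma Tmap_fromVec (N : ℕ) (u : Vec n N) : Tmap n N (fromVec n N u) = u := by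
  funext i
  rw [Tmap, coeff_fromVec, dif_pos i.2]

lemma fromVec_Tmap {N : ℕ} {p : MvPolynomial (Fin n) ℝ}
    (hsupp : ∀ i ∈ p.support, i ∈ Finset.Iic (topMon n N)) :
    fromVec n N (Tmap n N p) = p := by
  apply MvPolynomial.ext
  intro j
  rw [coeff_fromVec]
  split
  · rfl
  · rename_i h
    by_contra hc
    exact h (hsupp j (mem_support_iff.mpr fun h0 => hc h0.symm))

lemma Tmap_inj {N : ℕ} {p q : MvPolynomial (Fin n) ℝ}
    (hp : ∀ i ∈ p.support, i ∈ Finset.Iic (topMon n N))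
    (hq : ∀ i ∈ q.support, i ∈ Finset.Iic (topMon n N))
    (h : Tmap n N p = Tmap n N q) : p = q := by
  rw [← fromVec_Tmap hp, ← fromVec_Tmap hq, h]

lemma fromVec_smul (N : ℕ) (c : ℝ) (u : Vec n N) :
    fromVec n N (c • u) = c • fromVec n N u := by
  rw [fromVec, fromVec, Finset.smul_sum]
  exact Finset.sum_congr rfl fun i _ => by
    rw [Pi.smul_apply, smul_eq_mul, ← smul_eq_mul, smul_monomial]

@[simp] lemma fromVec_zero (N : ℕ) : fromVec n N (0 : Vec n N) = 0 := by
  simp [fromVec]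


/-- The constraint set of normalized `k`-sparse degree-`d` coefficient vectors. -/
def Bset (n d k : ℕ) : Set (Vec n d) :=
  {u | (∀ i : Mon n d, Finsupp.degree i.1 ≠ d → u i = 0) ∧
    (∃ A : Finset (Mon n d), A.card ≤ k ∧ ∀ i, i ∉ A → u i = 0) ∧ ‖u‖ = 1}

variable {d k : ℕ}

lemma isClosed_Bset : IsClosed (Bset n d k) := by
  have h1 : IsClosed {u : Vec n d | ∀ i : Mon n d, Finsupp.degree i.1 ≠ d → u i = 0} := by
    have he : {u : Vec n d | ∀ i : Mon n d, Finsupp.degree i.1 ≠ d → u i = 0} =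
        ⋂ i : Mon n d, {u : Vec n d | Finsupp.degree i.1 ≠ d → u i = 0} := by
      ext u; simp [Set.mem_iInter]
    rw [he]
    refine isClosed_iInter fun i => ?_
    by_cases h : Finsupp.degree i.1 = d
    · simp only [h, ne_eq, not_true_eq_false, false_implies, Set.setOf_true]
      exact isClosed_univ
    · simp only [h, ne_eq, not_false_eq_true, true_implies]
      exact isClosed_eq (continuous_apply i) continuous_const
  have h2 : IsClosed {u : Vec n d | ∃ A : Finset (Mon n d), A.card ≤ k ∧ ∀ i, i ∉ A → u i = 0} := by
    have he : {u : Vec n d | ∃ A : Finset (Mon n d), A.card ≤ k ∧ ∀ i, i ∉ A → u i = 0} =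
        ⋃ A : Finset (Mon n d), {u : Vec n d | A.card ≤ k ∧ ∀ i, i ∉ A → u i = 0} := by
      ext u; simp
    rw [he]
    refine isClosed_iUnion_of_finite fun A => ?_
    by_cases hA : A.card ≤ k
    · have he2 : {u : Vec n d | A.card ≤ k ∧ ∀ i, i ∉ A → u i = 0} =
          ⋂ i : Mon n d, {u : Vec n d | i ∉ A → u i = 0} := by
        ext u; simp [hA]
      rw [he2]
      refine isClosed_iInter fun i => ?_
      by_cases h : i ∈ A
      · simp only [h, not_true_eq_false, false_implies, Set.setOf_true]
        exact isClosed_univ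
      · simp only [h, not_false_eq_true, true_implies]
        exact isClosed_eq (continuous_apply i) continuous_const
    · have he2 : {u : Vec n d | A.card ≤ k ∧ ∀ i, i ∉ A → u i = 0} = ∅ := by
        ext u; simp [hA]
      rw [he2]; exact isClosed_empty
  have h3 : IsClosed {u : Vec n d | ‖u‖ = 1} :=
    isClosed_eq continuous_norm continuous_const
  rw [show Bset n d k = _ ∩ ({u : Vec n d | ∃ A : Finset (Mon n d), A.card ≤ k ∧
      ∀ i, i ∉ A → u i = 0} ∩ {u : Vec n d | ‖u‖ = 1}) from rfl]
  exact h1.inter (h2.inter h3)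

lemma isCompact_Bset : IsCompact (Bset n d k) := by
  refine (isCompact_closedBall (0 : Vec n d) 1).of_isClosed_subset isClosed_Bset fun u hu => ?_
  simp only [Metric.mem_closedBall, dist_zero_right]
  exact le_of_eq hu.2.2

/-- Coefficient vector of the square. -/
def Phi (n d : ℕ) (u : Vec n d) : Vec n (2*d) := Tmap n (2*d) ((fromVec n d u)^2)

lemma continuous_coeff_fromVec (N : ℕ) (a : Fin n →₀ ℕ) :
    Continuous fun u : Vec n N => coeff a (fromVec n N u) := by
  by_cases h : a ∈ Finset.Iic (topMon n N)
  · simp only [coeff_fromVec, dif_pos h]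
    exact continuous_apply _
  · simp only [coeff_fromVec, dif_neg h]
    exact continuous_const

lemma continuous_Phi : Continuous (Phi n d) := by
  refine continuous_pi fun j => ?_
  have he : (fun u => Phi n d u j)
      = fun u => ∑ x ∈ Finset.HasAntidiagonal.antidiagonal j.1,
          coeff x.1 (fromVec n d u) * coeff x.2 (fromVec n d u) := by
    funext u; simp [Phi, Tmap, sq, coeff_mul]
  rw [he]
  exact continuous_finset_sum _ fun x _ =>
    (continuous_coeff_fromVec _ _).mul (continuous_coeff_fromVec _ _)

/-- The set of coefficient vectors of squares of normalized `k`-sparse forms. -/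
def Sset (n d k : ℕ) : Set (Vec n (2*d)) := Phi n d '' Bset n d k

lemma isCompact_Sset : IsCompact (Sset n d k) := isCompact_Bset.image continuous_Phi

lemma isFormK_fromVec {u : Vec n d} (hu : u ∈ Bset n d k) : IsFormK n d k (fromVec n d u) := by
  constructor
  · refine IsHomogeneous.sum _ _ _ fun i _ => ?_
    by_cases h : Finsupp.degree i.1 = d
    · exact isHomogeneous_monomial _ h
    · rw [hu.1 i h, map_zero]
      exact isHomogeneous_zero _ _ _
  · obtain ⟨A, hA, hA0⟩ := hu.2.1
    refine le_trans (le_trans (Finset.card_le_card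
      (show (fromVec n d u).support ⊆ A.image (fun i => i.1) from ?_)) Finset.card_image_le) hA
    intro j hj
    rw [mem_support_iff, coeff_fromVec] at hj
    split at hj
    · rename_i h
      refine Finset.mem_image.mpr ⟨⟨j, h⟩, ?_, rfl⟩
      by_contra hA'
      exact hj (hA0 _ hA')
    · exact absurd rfl hj


private lemma sum_extend {M α β : Type*} [AddCommMonoid M] [Fintype α] [Fintype β]
    [DecidableEq β] (e : α ↪ β) (g : α → M) (g₀ : β → M)
    (h0 : ∀ i, (¬ ∃ y, e y = i) → g₀ i = 0) (he : ∀ y, g₀ (e y) = g y) :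
    ∑ i, g₀ i = ∑ y, g y := by
  have h1 : ∑ i ∈ Finset.univ.image e, g₀ i = ∑ i, g₀ i :=
    Finset.sum_subset (Finset.subset_univ _) (fun i _ hi =>
      h0 i fun ⟨y, hy⟩ => hi (Finset.mem_image.mpr ⟨y, Finset.mem_univ _, hy⟩))
  have h2 : ∑ i ∈ Finset.univ.image e, g₀ i = ∑ y, g y := by
    rw [Finset.sum_image fun a _ b _ h => e.injective h]
    exact Finset.sum_congr rfl fun y _ => he y
  rw [← h1, h2]

/-- Carathéodory: the convex hull of a compact set in a finite-dimensional normed real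
vector space is compact. -/
theorem isCompact_convexHull_of_isCompact {E : Type*} [NormedAddCommGroup E] [NormedSpace ℝ E]
    [FiniteDimensional ℝ E] {s : Set E} (hs : IsCompact s) : IsCompact (convexHull ℝ s) := by
  classical
  rcases s.eq_empty_or_nonempty with rfl | ⟨y₀, hy₀⟩
  · simpa using isCompact_empty
  set N := Module.finrank ℝ E + 1 with hN
  have hKcompact : IsCompact ((stdSimplex ℝ (Fin N)) ×ˢ (Set.univ.pi fun _ : Fin N => s)) :=
    (isCompact_stdSimplex (𝕜 := ℝ) (ι := Fin N)).prod (isCompact_univ_pi fun _ => hs)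
  have hcont : Continuous fun wz : (Fin N → ℝ) × (Fin N → E) => ∑ i, wz.1 i • wz.2 i :=
    continuous_finset_sum _ fun i _ =>
      ((continuous_apply i).comp continuous_fst).smul ((continuous_apply i).comp continuous_snd)
  have himage : convexHull ℝ s =
      (fun wz : (Fin N → ℝ) × (Fin N → E) => ∑ i, wz.1 i • wz.2 i) ''
        ((stdSimplex ℝ (Fin N)) ×ˢ (Set.univ.pi fun _ : Fin N => s)) := by
    apply Set.Subset.antisymm
    · intro x hx
      rw [convexHull_eq_union] at hx
      simp only [Set.mem_iUnion] at hx
      obtain ⟨t, hts, hai, hxt⟩ := hx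
      have hcard : t.card ≤ N := by
        have h := hai.card_le_finrank_succ (k := ℝ)
        rw [Fintype.card_coe] at h
        exact h.trans (Nat.add_le_add_right (Submodule.finrank_le _) 1)
      rw [Finset.convexHull_eq] at hxt
      obtain ⟨w, hw0, hw1, hcm⟩ := hxt
      have hx' : ∑ y ∈ t, w y • y = x := by
        rw [Finset.centerMass_eq_of_sum_1 _ id hw1] at hcm
        simpa using hcm
      obtain ⟨e⟩ : Nonempty (↥t ↪ Fin N) :=
        Function.Embedding.nonempty_of_card_le (by simpa [Fintype.card_coe] using hcard)
      set w' : Fin N → ℝ := fun i => if h : ∃ y : ↥t, e y = i then w h.choose else 0 with hw'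
      set z : Fin N → E := fun i => if h : ∃ y : ↥t, e y = i then (h.choose : E) else y₀ with hz
      have key : ∀ y : ↥t, w' (e y) = w ↑y ∧ z (e y) = ↑y := by
        intro y
        have h : ∃ y' : ↥t, e y' = e y := ⟨y, rfl⟩
        have hy : h.choose = y := e.injective h.choose_spec
        constructor
        · rw [hw']; dsimp only; rw [dif_pos h, hy]
        · rw [hz]; dsimp only; rw [dif_pos h, hy]
      refine ⟨(w', z), ⟨⟨fun i => ?_, ?_⟩, fun i _ => ?_⟩, ?_⟩
      · rw [hw']; dsimp only
        split
        · rename_i h; exact hw0 _ h.choose.2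
        · exact le_refl 0
      · have := sum_extend e (fun y : ↥t => w ↑y) w'
          (fun i hi => by rw [hw']; dsimp only; rw [dif_neg hi])
          (fun y => (key y).1)
        rw [this, Finset.sum_coe_sort t w, hw1]
      · rw [hz]; dsimp only
        split
        · rename_i h; exact hts h.choose.2
        · exact hy₀
      · dsimp only
        have := sum_extend e (fun y : ↥t => w ↑y • (↑y : E)) (fun i => w' i • z i)
          (fun i hi => by rw [hw', hz]; dsimp only; rw [dif_neg hi, zero_smul])
          (fun y => by rw [(key y).1, (key y).2])
        rw [this, Finset.sum_coe_sort t (fun y => w y • y), hx']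
    · rintro x ⟨⟨w, z⟩, ⟨hw, hz⟩, rfl⟩
      exact (convex_convexHull ℝ s).sum_mem (fun i _ => hw.1 i) hw.2
        (fun i _ => subset_convexHull ℝ s (hz i (Set.mem_univ i)))
  rw [himage]
  exact hKcompact.image hcont

lemma degree_single_eq {x : Fin n} {m : ℕ} (hm : m ≠ 0) :
    Finsupp.degree (Finsupp.single x m) = m := by
  exact Finsupp.degree_single x m

lemma Sset_nonempty (hn : 0 < n) (hd : 0 < d) (hk : 1 ≤ k) : (Sset n d k).Nonempty := by
  classical
  have hmem : Finsupp.single (⟨0, hn⟩ : Fin n) d ∈ Finset.Iic (topMon n d) :=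
    mem_Iic_topMon (le_of_eq (degree_single_eq hd.ne'))
  set i₀ : Mon n d := ⟨Finsupp.single ⟨0, hn⟩ d, hmem⟩ with hi₀
  refine ⟨Phi n d (Pi.single i₀ 1), Set.mem_image_of_mem _ ⟨?_, ⟨{i₀}, ?_, ?_⟩, ?_⟩⟩
  · intro i hi
    rcases eq_or_ne i i₀ with rfl | hne
    · exact absurd (degree_single_eq hd.ne') hi
    · exact Pi.single_eq_of_ne hne 1
  · simpa using hk
  · intro i hi
    exact Pi.single_eq_of_ne (by simpa using hi) 1
  · rw [Pi.norm_single]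
    exact norm_one

lemma zero_not_mem_hull : (0 : Vec n (2*d)) ∉ convexHull ℝ (Sset n d k) := by
  classical
  intro h0
  rw [convexHull_eq] at h0
  obtain ⟨ι, s, w, z, hw0, hw1, hz, hcm⟩ := h0
  choose uu huB huPhi using hz
  set P : MvPolynomial (Fin n) ℝ := ∑ i ∈ s.attach, w i.1 • (fromVec n d (uu i.1 i.2))^2 with hP
  have hPhom : P.IsHomogeneous (2*d) := by
    refine IsHomogeneous.sum _ _ _ fun i _ => ?_
    have h2 := ((isFormK_fromVec (huB i.1 i.2)).1.pow 2)
    rw [mul_comm] at h2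
    rw [smul_eq_C_mul]
    exact h2.C_mul _
  have hTP : Tmap n (2*d) P = 0 := by
    rw [hP, Tmap_sum]
    have hcg : ∀ i ∈ s.attach,
        Tmap n (2*d) (w i.1 • (fromVec n d (uu i.1 i.2))^2) = w i.1 • z i.1 := by
      intro i _
      rw [Tmap_smul, ← huPhi i.1 i.2]
      rfl
    rw [Finset.sum_congr rfl hcg, Finset.sum_attach s (fun i => w i • z i)]
    rw [Finset.centerMass_eq_of_sum_1 _ z hw1] at hcm
    exact hcm
  have hP0 : P = 0 := by
    rw [← fromVec_Tmap (support_subset_Iic hPhom), hTP, fromVec_zero]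
  obtain ⟨i₀, hi₀, hwi₀⟩ := Finset.exists_ne_zero_of_sum_ne_zero (hw1 ▸ (one_ne_zero (α := ℝ)))
  have hfz : fromVec n d (uu i₀ hi₀) = 0 := by
    apply MvPolynomial.funext
    intro x
    rw [map_zero]
    have hev : ∑ i ∈ s.attach, w i.1 * (eval x (fromVec n d (uu i.1 i.2)))^2 = 0 := by
      have h := congrArg (eval x) hP0
      rw [hP] at h
      simpa [smul_eval] using h
    have hterm := (Finset.sum_eq_zero_iff_of_nonneg
      (fun i _ => mul_nonneg (hw0 i.1 i.2) (sq_nonneg _))).mp hev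
      ⟨i₀, hi₀⟩ (Finset.mem_attach _ _)
    rcases mul_eq_zero.mp hterm with h | h
    · exact absurd h hwi₀
    · exact pow_eq_zero_iff two_ne_zero |>.mp h
  have hu0 : uu i₀ hi₀ = 0 := by
    rw [← Tmap_fromVec d (uu i₀ hi₀), hfz, Tmap_zero]
  have hn1 := (huB i₀ hi₀).2.2
  rw [hu0, norm_zero] at hn1
  exact zero_ne_one hn1

lemma exists_eps (hn : 0 < n) (hd : 0 < d) (hk : 1 ≤ k) :
    ∃ ε : ℝ, 0 < ε ∧ ∀ q ∈ convexHull ℝ (Sset n d k), ε ≤ ‖q‖ := by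
  have hK : IsCompact (convexHull ℝ (Sset n d k)) :=
    isCompact_convexHull_of_isCompact isCompact_Sset
  have hne : (convexHull ℝ (Sset n d k)).Nonempty :=
    (Sset_nonempty hn hd hk).mono (subset_convexHull ℝ _)
  obtain ⟨x₀, hx₀, hmin⟩ := hK.exists_isMinOn hne continuous_norm.continuousOn
  refine ⟨‖x₀‖, ?_, fun q hq => isMinOn_iff.mp hmin q hq⟩
  rw [norm_pos_iff]
  exact fun h => zero_not_mem_hull (h ▸ hx₀)

lemma isFormK_smul (c : ℝ) {h : MvPolynomial (Fin n) ℝ} (hh : IsFormK n d k h) :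
    IsFormK n d k (c • h) :=
  ⟨by rw [smul_eq_C_mul]; exact hh.1.C_mul c,
   le_trans (Finset.card_le_card MvPolynomial.support_smul) hh.2⟩

lemma homog_of_mem {p : MvPolynomial (Fin n) ℝ} (hp : p ∈ SigmaSOS n d k) :
    p.IsHomogeneous (2*d) := by
  obtain ⟨m, f, hf, rfl⟩ := hp
  refine IsHomogeneous.sum _ _ _ fun j _ => ?_
  have h2 := (hf j).1.pow 2
  rwa [mul_comm] at h2

lemma rep_of_mem (hn : 0 < n) (hd : 0 < d) (hk : 1 ≤ k) {p : MvPolynomial (Fin n) ℝ}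
    (hp : p ∈ SigmaSOS n d k) :
    ∃ t : ℝ, 0 ≤ t ∧ ∃ q ∈ convexHull ℝ (Sset n d k), Tmap n (2*d) p = t • q := by
  classical
  obtain ⟨m, f, hf, rfl⟩ := hp
  set J : Finset (Fin m) := Finset.univ.filter (fun j => f j ≠ 0) with hJ
  have hsplit : Tmap n (2*d) (∑ j, f j ^ 2) = ∑ j ∈ J, Tmap n (2*d) (f j ^ 2) := by
    rw [Tmap_sum]
    refine (Finset.sum_subset (Finset.filter_subset _ _) (fun j _ hj => ?_)).symm
    have hfj : f j = 0 := by simpa [hJ] using hj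
    rw [hfj]
    simp
  set c : Fin m → ℝ := fun j => ‖Tmap n d (f j)‖ ^ 2 with hc
  set u : Fin m → Vec n d := fun j => ‖Tmap n d (f j)‖⁻¹ • Tmap n d (f j) with hu
  have hvne : ∀ j ∈ J, Tmap n d (f j) ≠ 0 := by
    intro j hj h0
    have hfj : f j = 0 := by
      rw [← fromVec_Tmap (support_subset_Iic (hf j).1), h0, fromVec_zero]
    simp [hJ, hfj] at hj
  have huB : ∀ j ∈ J, u j ∈ Bset n d k := by
    intro j hj
    refine ⟨?_, ⟨Finset.univ.filter (fun i : Mon n d => i.1 ∈ (f j).support), ?_, ?_⟩, ?_⟩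
    · intro i hi
      rw [hu]; dsimp only
      rw [Pi.smul_apply, smul_eq_mul, show Tmap n d (f j) i = coeff i.1 (f j) from rfl,
        (hf j).1.coeff_eq_zero hi, mul_zero]
    · refine le_trans (Finset.card_le_card_of_injOn (fun i => i.1) ?_ ?_) (hf j).2
      · intro i hi; simpa using (Finset.mem_filter.mp hi).2
      · exact fun a _ b _ hab => Subtype.ext hab
    · intro i hi
      simp only [Finset.mem_filter, Finset.mem_univ, true_and] at hi
      rw [hu]; dsimp only
      rw [Pi.smul_apply, smul_eq_mul, show Tmap n d (f j) i = coeff i.1 (f j) from rfl,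
        notMem_support_iff.mp hi, mul_zero]
    · rw [hu]; dsimp only
      rw [norm_smul, norm_inv, norm_norm]
      exact inv_mul_cancel₀ (norm_ne_zero_iff.mpr (hvne j hj))
  have hPhiEq : ∀ j ∈ J, Tmap n (2*d) (f j ^ 2) = c j • Phi n d (u j) := by
    intro j hj
    have hfu : fromVec n d (u j) = ‖Tmap n d (f j)‖⁻¹ • f j := by
      rw [hu]; dsimp only
      rw [fromVec_smul, fromVec_Tmap (support_subset_Iic (hf j).1)]
    have hph : Phi n d (u j) = (‖Tmap n d (f j)‖⁻¹)^2 • Tmap n (2*d) (f j ^ 2) := by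
      show Tmap n (2*d) ((fromVec n d (u j))^2) = _
      rw [hfu, smul_pow, Tmap_smul]
    rw [hph, hc]; dsimp only
    rw [smul_smul, ← mul_pow, mul_inv_cancel₀ (norm_ne_zero_iff.mpr (hvne j hj)), one_pow,
      one_smul]
  set t : ℝ := ∑ j ∈ J, c j with htdef
  have htnn : 0 ≤ t := Finset.sum_nonneg fun j _ => sq_nonneg _
  by_cases ht : t = 0
  · have hJe : J = ∅ := by
      rw [Finset.eq_empty_iff_forall_notMem]
      intro j hj
      have hz := (Finset.sum_eq_zero_iff_of_nonneg (fun j _ => sq_nonneg _)).mp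
        (htdef.symm.trans ht) j hj
      have h0 : ‖Tmap n d (f j)‖ = 0 := pow_eq_zero_iff two_ne_zero |>.mp hz
      exact (hvne j hj) (norm_eq_zero.mp h0)
    obtain ⟨q₀, hq₀⟩ := Sset_nonempty hn hd hk
    refine ⟨0, le_refl 0, q₀, subset_convexHull ℝ _ hq₀, ?_⟩
    rw [hsplit, hJe, Finset.sum_empty, zero_smul]
  · have htpos : 0 < t := lt_of_le_of_ne htnn (Ne.symm ht)
    refine ⟨t, htnn, ∑ j ∈ J, (c j / t) • Phi n d (u j), ?_, ?_⟩
    · refine (convex_convexHull ℝ _).sum_mem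
        (fun j _ => div_nonneg (sq_nonneg _) htnn)
        (by rw [← Finset.sum_div, ← htdef, div_self ht])
        (fun j hj => subset_convexHull ℝ _ ⟨u j, huB j hj, rfl⟩)
    · rw [hsplit, Finset.smul_sum]
      refine Finset.sum_congr rfl fun j hj => ?_
      rw [hPhiEq j hj, smul_smul]
      congr 1
      field_simp

lemma mem_of_rep {p : MvPolynomial (Fin n) ℝ}
    (hsupp : ∀ i ∈ p.support, i ∈ Finset.Iic (topMon n (2*d)))
    {t : ℝ} (ht : 0 ≤ t) {q : Vec n (2*d)} (hq : q ∈ convexHull ℝ (Sset n d k))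
    (hrep : Tmap n (2*d) p = t • q) : p ∈ SigmaSOS n d k := by
  classical
  rw [convexHull_eq] at hq
  obtain ⟨ι, s, w, z, hw0, hw1, hz, hcm⟩ := hq
  choose uu huB huPhi using hz
  set g : ↥s → MvPolynomial (Fin n) ℝ :=
    fun i => Real.sqrt (t * w i.1) • fromVec n d (uu i.1 i.2) with hg
  have hgF : ∀ i, IsFormK n d k (g i) := fun i =>
    isFormK_smul _ (isFormK_fromVec (huB i.1 i.2))
  set P : MvPolynomial (Fin n) ℝ := ∑ i : ↥s, (g i)^2 with hPdef
  have hPhom : P.IsHomogeneous (2*d) := by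
    refine IsHomogeneous.sum _ _ _ fun i _ => ?_
    have h2 := (hgF i).1.pow 2
    rwa [mul_comm] at h2
  have hTP : Tmap n (2*d) P = t • q := by
    rw [hPdef, Tmap_sum]
    have hcg : ∀ i : ↥s, Tmap n (2*d) ((g i)^2) = (t * w i.1) • z i.1 := by
      intro i
      rw [hg]; dsimp only
      rw [smul_pow, Tmap_smul, Real.sq_sqrt (mul_nonneg ht (hw0 i.1 i.2)), ← huPhi i.1 i.2]
      rfl
    rw [Finset.sum_congr rfl (fun i _ => hcg i)]
    simp_rw [mul_smul]
    rw [← Finset.smul_sum, Finset.univ_eq_attach, Finset.sum_attach s (fun i => w i • z i)]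
    rw [Finset.centerMass_eq_of_sum_1 _ z hw1] at hcm
    rw [hcm]
  have hpP : p = P :=
    Tmap_inj hsupp (support_subset_Iic hPhom) (by rw [hrep, hTP])
  refine ⟨Fintype.card ↥s, fun j => g ((Fintype.equivFin ↥s).symm j), fun j => hgF _, ?_⟩
  rw [hpP, hPdef]
  exact (Equiv.sum_comp (Fintype.equivFin ↥s).symm (fun i => g i ^ 2)).symm

theorem sigma_sos_closed_convex_cone (n d k : ℕ) (hn : 0 < n) (hd : 0 < d) (hk : 1 ≤ k) :
    (∀ p q : MvPolynomial (Fin n) ℝ,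
        p ∈ SigmaSOS n d k → q ∈ SigmaSOS n d k → p + q ∈ SigmaSOS n d k) ∧
    (∀ (c : ℝ) (p : MvPolynomial (Fin n) ℝ),
        0 ≤ c → p ∈ SigmaSOS n d k → c • p ∈ SigmaSOS n d k) ∧
    (∀ (pm : ℕ → MvPolynomial (Fin n) ℝ) (p : MvPolynomial (Fin n) ℝ),
        (∀ m, pm m ∈ SigmaSOS n d k) →
        (∀ i : Fin n →₀ ℕ,
          Tendsto (fun m => coeff i (pm m)) atTop (nhds (coeff i p))) →
        p ∈ SigmaSOS n d k) := by
  refine ⟨?_, ?_, ?_⟩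
  · rintro p q ⟨m₁, f₁, hf₁, rfl⟩ ⟨m₂, f₂, hf₂, rfl⟩
    refine ⟨m₁ + m₂, Fin.append f₁ f₂, ?_, ?_⟩
    · intro j
      refine Fin.addCases (fun i => ?_) (fun i => ?_) j
      · rw [Fin.append_left]; exact hf₁ i
      · rw [Fin.append_right]; exact hf₂ i
    · rw [Fin.sum_univ_add]
      simp only [Fin.append_left, Fin.append_right]
  · rintro c p hc ⟨m, f, hf, rfl⟩
    refine ⟨m, fun j => Real.sqrt c • f j, fun j => isFormK_smul _ (hf j), ?_⟩
    rw [Finset.smul_sum]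
    refine Finset.sum_congr rfl fun j _ => ?_
    rw [smul_pow, Real.sq_sqrt hc]
  · intro pm p hpm hconv
    obtain ⟨ε, hε, hεb⟩ := exists_eps (n := n) (d := d) (k := k) hn hd hk
    choose t ht q hq hrep using fun m => rep_of_mem hn hd hk (hpm m)
    have hT : Tendsto (fun m => Tmap n (2*d) (pm m)) atTop (nhds (Tmap n (2*d) p)) :=
      tendsto_pi_nhds.mpr fun i => hconv i.1
    obtain ⟨C, hC⟩ := hT.norm.bddAbove_range
    have htC : ∀ m, t m ∈ Set.Icc (0:ℝ) (C / ε) := by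
      intro m
      refine ⟨ht m, ?_⟩
      have h1 : t m * ε ≤ ‖Tmap n (2*d) (pm m)‖ := by
        rw [hrep m, norm_smul, Real.norm_of_nonneg (ht m)]
        exact mul_le_mul_of_nonneg_left (hεb _ (hq m)) (ht m)
      have h2 : ‖Tmap n (2*d) (pm m)‖ ≤ C := hC ⟨m, rfl⟩
      exact (le_div_iff₀ hε).mpr (h1.trans h2)
    have hK : IsCompact (convexHull ℝ (Sset n d k)) :=
      isCompact_convexHull_of_isCompact isCompact_Sset
    obtain ⟨q₀, hq₀, φ₁, hφ₁, hq₁⟩ := hK.tendsto_subseq hq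
    obtain ⟨t₀, ht₀, φ₂, hφ₂, ht₂⟩ :=
      (isCompact_Icc (a := (0:ℝ)) (b := C / ε)).tendsto_subseq (fun i => htC (φ₁ i))
    have hqconv : Tendsto (fun i => q (φ₁ (φ₂ i))) atTop (nhds q₀) :=
      hq₁.comp hφ₂.tendsto_atTop
    have hTconv : Tendsto (fun i => Tmap n (2*d) (pm (φ₁ (φ₂ i)))) atTop
        (nhds (Tmap n (2*d) p)) :=
      hT.comp ((hφ₁.comp hφ₂).tendsto_atTop)
    have hsmul : Tendsto (fun i => t (φ₁ (φ₂ i)) • q (φ₁ (φ₂ i))) atTop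
        (nhds (t₀ • q₀)) := ht₂.smul hqconv
    have hEq : Tmap n (2*d) p = t₀ • q₀ := by
      refine tendsto_nhds_unique ?_ hsmul
      have he : (fun i => Tmap n (2*d) (pm (φ₁ (φ₂ i))))
          = fun i => t (φ₁ (φ₂ i)) • q (φ₁ (φ₂ i)) := funext fun i => hrep _
      rw [← he]
      exact hTconv
    refine mem_of_rep ?_ ht₀.1 hq₀ hEq
    intro i hi
    by_contra hni
    have hz : ∀ m, coeff i (pm m) = 0 := fun m => by
      by_contra hc
      exact hni (support_subset_Iic (homog_of_mem (hpm m)) i (mem_support_iff.mpr hc))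
    have h0 : coeff i p = 0 := by
      refine tendsto_nhds_unique (hconv i) ?_
      simp_rw [hz]
      exact tendsto_const_nhds
    exact (mem_support_iff.mp hi) h0

end SOSAux
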